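/- arXiv:0904.1997 — 2 statements merged into one kernel-verified Lean document; each statement's English description precedes it below -/
import Mathlib

section
/- For a classical structure X, the coKleisli and Kleisli categories of the functor X ⊗ (−) are isomorphic via transposition: the maps Φ : Hom(X ⊗ A, B) ⟶ Hom(A, X ⊗ B), Φ(f) := λ_A⁻¹ ≫ (η_X ⊗ 𝟙_A) ≫ (𝟙_X ⊗ f), and Ψ : Hom(A, X ⊗ B) ⟶ Hom(X ⊗ A, B), Ψ(h) := (𝟙_X ⊗ h) ≫ (ε_X ⊗ 𝟙_B) ≫ λ_B, are mutually inverse; moreover Φ sends the coKleisli identity (⊤ ⊗ 𝟙_A) ≫ λ_A to the Kleisli identity λ_A⁻¹ ≫ (⊥ ⊗ 𝟙_A), and for f : X ⊗ A ⟶ B and g : X ⊗ B ⟶ C it satisfies Φ((Δ ⊗ 𝟙_A) ≫ (𝟙_X ⊗ f) ≫ g) = Φ(f) ≫ (𝟙_X ⊗ Φ(g)) ≫ (∇ ⊗ 𝟙_C). -/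
open CategoryTheory MonoidalCategory

universe v u

variable {C : Type u} [Category.{v} C] [MonoidalCategory C] [SymmetricCategory C]

/-- A dagger structure on a symmetric monoidal category: an involutive,
identity-on-objects, contravariant functor that coherently preserves the
symmetric monoidal structure. -/
structure Dagger (C : Type u) [Category.{v} C] [MonoidalCategory C]
    [SymmetricCategory C] where
  dag : ∀ {A B : C}, (A ⟶ B) → (B ⟶ A)
  dag_comp : ∀ {A B E : C} (f : A ⟶ B) (g : B ⟶ E), dag (f ≫ g) = dag g ≫ dag f
  dag_id : ∀ A : C, dag (𝟙 A) = 𝟙 A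
  dag_dag : ∀ {A B : C} (f : A ⟶ B), dag (dag f) = f
  dag_tensor : ∀ {A B A' B' : C} (f : A ⟶ B) (g : A' ⟶ B'),
    dag (f ⊗ₘ g) = dag f ⊗ₘ dag g
  dag_assoc : ∀ A B E : C, dag (α_ A B E).hom = (α_ A B E).inv
  dag_lUnit : ∀ A : C, dag (λ_ A).hom = (λ_ A).inv
  dag_rUnit : ∀ A : C, dag (ρ_ A).hom = (ρ_ A).inv
  dag_braid : ∀ A B : C, dag (β_ A B).hom = (β_ A B).inv

/-- Positivity of an endomorphism: `e = g† ≫ g` for some `g : W ⟶ A`. -/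
def Dagger.IsPositive (D : Dagger C) {A : C} (e : A ⟶ A) : Prop :=
  ∃ (W : C) (g : W ⟶ A), e = D.dag g ≫ g

/-- A classical structure: a commutative monoid object which, together with the
daggers of its multiplication and unit, is a special Frobenius algebra. -/
structure ClassicalStructure (D : Dagger C) (X : C) where
  mul : X ⊗ X ⟶ X
  unit : 𝟙_ C ⟶ X
  mul_assoc' : (α_ X X X).hom ≫ (𝟙 X ⊗ₘ mul) ≫ mul = (mul ⊗ₘ 𝟙 X) ≫ mul
  one_mul' : (unit ⊗ₘ 𝟙 X) ≫ mul = (λ_ X).hom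
  mul_one' : (𝟙 X ⊗ₘ unit) ≫ mul = (ρ_ X).hom
  mul_comm' : (β_ X X).hom ≫ mul = mul
  frobenius' : (𝟙 X ⊗ₘ D.dag mul) ≫ (α_ X X X).inv ≫ (mul ⊗ₘ 𝟙 X) = mul ≫ D.dag mul
  special' : D.dag mul ≫ mul = 𝟙 X

namespace ClassicalStructure

variable {D : Dagger C}

/-- The comultiplication `Δ := ∇†`. -/
def comul {X : C} (S : ClassicalStructure D X) : X ⟶ X ⊗ X := D.dag S.mul

/-- The counit `⊤ := ⊥†`. -/
def counit {X : C} (S : ClassicalStructure D X) : X ⟶ 𝟙_ C := D.dag S.unit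

/-- The induced Bell state `η := ⊥ ≫ Δ`. -/
def eta {X : C} (S : ClassicalStructure D X) : 𝟙_ C ⟶ X ⊗ X := S.unit ≫ S.comul

/-- The induced Bell costate `ε := ∇ ≫ ⊤`. -/
def eps {X : C} (S : ClassicalStructure D X) : X ⊗ X ⟶ 𝟙_ C := S.mul ≫ S.counit

/-- The decoherence `Ξ := ∇ ≫ Δ`. -/
def Xi {X : C} (S : ClassicalStructure D X) : X ⊗ X ⟶ X ⊗ X := S.mul ≫ S.comul

end ClassicalStructure

/-- A morphism `f : X ⟶ Y` between classical structures is classical if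
`(Δ_X ⊗ 𝟙_Y) ≫ (𝟙_X ⊗ f ⊗ 𝟙_Y) ≫ (𝟙_X ⊗ ∇_Y)` is positive. -/
def IsClassical {X Y : C} (D : Dagger C) (XS : ClassicalStructure D X)
    (YS : ClassicalStructure D Y) (f : X ⟶ Y) : Prop :=
  D.IsPositive ((XS.comul ⊗ₘ 𝟙 Y) ≫ ((𝟙 X ⊗ₘ f) ⊗ₘ 𝟙 Y) ≫ (α_ X Y Y).hom ≫ (𝟙 X ⊗ₘ YS.mul))

/-- The conjugate `f_* := (η_Y ⊗ 𝟙_X) ≫ (𝟙_Y ⊗ f† ⊗ 𝟙_X) ≫ (𝟙_Y ⊗ ε_X)`. -/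
def conjugate {X Y : C} (D : Dagger C) (XS : ClassicalStructure D X)
    (YS : ClassicalStructure D Y) (f : X ⟶ Y) : X ⟶ Y :=
  (λ_ X).inv ≫ (YS.eta ⊗ₘ 𝟙 X) ≫ (α_ Y Y X).hom ≫ (𝟙 Y ⊗ₘ (D.dag f ⊗ₘ 𝟙 X)) ≫
    (𝟙 Y ⊗ₘ XS.eps) ≫ (ρ_ Y).hom

/-- The convolution `f ⋆ g := Δ_X ≫ (f_* ⊗ g) ≫ ∇_Y`. -/
def convol {X Y : C} (D : Dagger C) (XS : ClassicalStructure D X)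
    (YS : ClassicalStructure D Y) (f g : X ⟶ Y) : X ⟶ Y :=
  XS.comul ≫ (conjugate D XS YS f ⊗ₘ g) ≫ YS.mul

/-- A relation is a convolution-idempotent: `r = r ⋆ r`. -/
def IsRelation {X Y : C} (D : Dagger C) (XS : ClassicalStructure D X)
    (YS : ClassicalStructure D Y) (r : X ⟶ Y) : Prop :=
  r = convol D XS YS r r

/-- Single-valuedness: `r ≫ Δ_Y = Δ_X ≫ (r ⊗ r)`. -/
def SingleValued {X Y : C} (D : Dagger C) (XS : ClassicalStructure D X)
    (YS : ClassicalStructure D Y) (r : X ⟶ Y) : Prop :=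
  r ≫ YS.comul = XS.comul ≫ (r ⊗ₘ r)

/-- Totality: `r ≫ ⊤_Y = ⊤_X`. -/
def TotalRel {X Y : C} (D : Dagger C) (XS : ClassicalStructure D X)
    (YS : ClassicalStructure D Y) (r : X ⟶ Y) : Prop :=
  r ≫ YS.counit = XS.counit

/-- A function is a single-valued total relation. -/
def IsFunctionRel {X Y : C} (D : Dagger C) (XS : ClassicalStructure D X)
    (YS : ClassicalStructure D Y) (r : X ⟶ Y) : Prop :=
  IsRelation D XS YS r ∧ SingleValued D XS YS r ∧ TotalRel D XS YS r

/-- The middle-four interchange `(X ⊗ Y) ⊗ (Z ⊗ W) ⟶ (X ⊗ Z) ⊗ (Y ⊗ W)`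
built from associators and the braiding. -/
def midSwap (X Y Z W : C) : (X ⊗ Y) ⊗ (Z ⊗ W) ⟶ (X ⊗ Z) ⊗ (Y ⊗ W) :=
  (α_ X Y (Z ⊗ W)).hom ≫ (𝟙 X ⊗ₘ (α_ Y Z W).inv) ≫ (𝟙 X ⊗ₘ ((β_ Y Z).hom ⊗ₘ 𝟙 W)) ≫
    (𝟙 X ⊗ₘ (α_ Z Y W).hom) ≫ (α_ X Z (Y ⊗ W)).inv

/-- The multiplication `∇_{X⊗Y} := (𝟙_X ⊗ β_{Y,X} ⊗ 𝟙_Y) ≫ (∇_X ⊗ ∇_Y)` of the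
tensor of two classical structures. -/
def tensorMul {X Y : C} {D : Dagger C} (XS : ClassicalStructure D X)
    (YS : ClassicalStructure D Y) : (X ⊗ Y) ⊗ (X ⊗ Y) ⟶ X ⊗ Y :=
  midSwap X Y X Y ≫ (XS.mul ⊗ₘ YS.mul)

/-- The unit `⊥_{X⊗Y} := ⊥_X ⊗ ⊥_Y` of the tensor of two classical structures. -/
def tensorUnit'' {X Y : C} {D : Dagger C} (XS : ClassicalStructure D X)
    (YS : ClassicalStructure D Y) : 𝟙_ C ⟶ X ⊗ Y :=
  (λ_ (𝟙_ C)).inv ≫ (XS.unit ⊗ₘ YS.unit)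

/-- Complete positivity of `g : X ⊗ X ⟶ Y ⊗ Y` relative to the self-dual compact
structures induced by the classical structures:
`(𝟙_X ⊗ η_X ⊗ 𝟙_Y) ≫ (𝟙_X ⊗ g ⊗ 𝟙_Y) ≫ (𝟙_{X⊗Y} ⊗ ε_Y)` is positive. -/
def IsCP {X Y : C} (D : Dagger C) (XS : ClassicalStructure D X)
    (YS : ClassicalStructure D Y) (g : X ⊗ X ⟶ Y ⊗ Y) : Prop :=
  D.IsPositive ((𝟙 X ⊗ₘ (λ_ Y).inv) ≫ (𝟙 X ⊗ₘ (XS.eta ⊗ₘ 𝟙 Y)) ≫ (𝟙 X ⊗ₘ (g ⊗ₘ 𝟙 Y)) ≫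
    (𝟙 X ⊗ₘ (α_ Y Y Y).hom) ≫ (α_ X Y (Y ⊗ Y)).inv ≫ (𝟙 (X ⊗ Y) ⊗ₘ YS.eps) ≫
    (ρ_ (X ⊗ Y)).hom)

/-- A stochastic morphism: classical and total. -/
def Stochastic {X Y : C} (D : Dagger C) (XS : ClassicalStructure D X)
    (YS : ClassicalStructure D Y) (s : X ⟶ Y) : Prop :=
  IsClassical D XS YS s ∧ TotalRel D XS YS s

/-- A doubly stochastic morphism: both `s` and `s†` are stochastic. -/
def DoublyStochastic {X Y : C} (D : Dagger C) (XS : ClassicalStructure D X)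
    (YS : ClassicalStructure D Y) (s : X ⟶ Y) : Prop :=
  Stochastic D XS YS s ∧ Stochastic D YS XS (D.dag s)

/-- The transposition `Φ(f) := λ_A⁻¹ ≫ (η_X ⊗ 𝟙_A) ≫ (𝟙_X ⊗ f)`. -/
def Phi {X A B : C} (D : Dagger C) (XS : ClassicalStructure D X)
    (f : X ⊗ A ⟶ B) : A ⟶ X ⊗ B :=
  (λ_ A).inv ≫ (XS.eta ⊗ₘ 𝟙 A) ≫ (α_ X X A).hom ≫ (𝟙 X ⊗ₘ f)

/-- The transposition `Ψ(h) := (𝟙_X ⊗ h) ≫ (ε_X ⊗ 𝟙_B) ≫ λ_B`. -/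
def Psi {X A B : C} (D : Dagger C) (XS : ClassicalStructure D X)
    (h : A ⟶ X ⊗ B) : X ⊗ A ⟶ B :=
  (𝟙 X ⊗ₘ h) ≫ (α_ X X B).inv ≫ (XS.eps ⊗ₘ 𝟙 B) ≫ (λ_ B).hom

section Helpers

variable {X : C} (D : Dagger C) (XS : ClassicalStructure D X)

lemma dag_wl {A B E : C} (f : B ⟶ E) : D.dag (A ◁ f) = A ◁ D.dag f := by
  rw [← id_tensorHom, D.dag_tensor, D.dag_id, id_tensorHom]

lemma dag_wr {A B E : C} (f : B ⟶ E) : D.dag (f ▷ A) = D.dag f ▷ A := by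
  rw [← tensorHom_id, D.dag_tensor, D.dag_id, tensorHom_id]

lemma dag_assoc_inv (A B E : C) : D.dag (α_ A B E).inv = (α_ A B E).hom := by
  rw [← D.dag_assoc, D.dag_dag]

lemma dag_lUnit_inv (A : C) : D.dag (λ_ A).inv = (λ_ A).hom := by
  rw [← D.dag_lUnit, D.dag_dag]

lemma dag_rUnit_inv (A : C) : D.dag (ρ_ A).inv = (ρ_ A).hom := by
  rw [← D.dag_rUnit, D.dag_dag]

lemma coassoc : XS.comul ≫ X ◁ XS.comul = XS.comul ≫ XS.comul ▷ X ≫ (α_ X X X).hom := by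
  have h := congrArg D.dag XS.mul_assoc'
  simp only [id_tensorHom, tensorHom_id, D.dag_comp, dag_wl, dag_wr, D.dag_assoc] at h
  simp only [ClassicalStructure.comul]
  rw [← Category.assoc, ← h]
  simp

lemma frob1 : X ◁ XS.comul ≫ (α_ X X X).inv ≫ XS.mul ▷ X = XS.mul ≫ XS.comul := by
  have h := XS.frobenius'
  simp only [id_tensorHom, tensorHom_id] at h
  simpa [ClassicalStructure.comul] using h

lemma frob2 : XS.comul ▷ X ≫ (α_ X X X).hom ≫ X ◁ XS.mul = XS.mul ≫ XS.comul := by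
  have h := congrArg D.dag (frob1 D XS)
  simp only [D.dag_comp, dag_wl, dag_wr, dag_assoc_inv, D.dag_dag,
    ClassicalStructure.comul] at h
  simpa [ClassicalStructure.comul, Category.assoc] using h

lemma one_mul_w : XS.unit ▷ X ≫ XS.mul = (λ_ X).hom := by
  have h := XS.one_mul'; simpa [tensorHom_id] using h

lemma mul_one_w : X ◁ XS.unit ≫ XS.mul = (ρ_ X).hom := by
  have h := XS.mul_one'; simpa [id_tensorHom] using h

lemma comul_counit_w : XS.comul ≫ X ◁ XS.counit = (ρ_ X).inv := by
  have h := congrArg D.dag (mul_one_w D XS)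
  simp only [D.dag_comp, dag_wl, D.dag_rUnit] at h
  simpa [ClassicalStructure.comul, ClassicalStructure.counit] using h

lemma counit_comul_w : XS.comul ≫ XS.counit ▷ X = (λ_ X).inv := by
  have h := congrArg D.dag (one_mul_w D XS)
  simp only [D.dag_comp, dag_wr, D.dag_lUnit] at h
  simpa [ClassicalStructure.comul, ClassicalStructure.counit] using h

lemma special_w : XS.comul ≫ XS.mul = 𝟙 X := XS.special'

lemma snake1 : (ρ_ X).inv ≫ X ◁ XS.eta ≫ (α_ X X X).inv ≫ XS.eps ▷ X ≫ (λ_ X).hom = 𝟙 X := by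
  simp only [ClassicalStructure.eta, ClassicalStructure.eps,
    MonoidalCategory.whiskerLeft_comp, comp_whiskerRight, Category.assoc]
  slice_lhs 3 5 => rw [frob1 D XS]
  slice_lhs 2 3 => rw [mul_one_w D XS]
  slice_lhs 3 4 => rw [counit_comul_w D XS]
  simp

lemma snake2 : (λ_ X).inv ≫ XS.eta ▷ X ≫ (α_ X X X).hom ≫ X ◁ XS.eps ≫ (ρ_ X).hom = 𝟙 X := by
  simp only [ClassicalStructure.eta, ClassicalStructure.eps,
    MonoidalCategory.whiskerLeft_comp, comp_whiskerRight, Category.assoc]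
  slice_lhs 3 5 => rw [frob2 D XS]
  slice_lhs 2 3 => rw [one_mul_w D XS]
  slice_lhs 3 4 => rw [comul_counit_w D XS]
  simp

lemma keyEta : XS.eta ≫ X ◁ XS.comul
    = XS.eta ≫ X ◁ ((λ_ X).inv ≫ XS.eta ▷ X ≫ (α_ X X X).hom) ≫ (α_ X X (X ⊗ X)).inv
        ≫ XS.mul ▷ (X ⊗ X) := by
  have inner : (ρ_ X).inv ≫ X ◁ XS.unit ≫ X ◁ XS.comul ≫ (α_ X X X).inv ≫ XS.mul ▷ X
      = XS.comul := by
    slice_lhs 3 5 => rw [frob1 D XS]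
    slice_lhs 2 3 => rw [mul_one_w D XS]
    simp
  have step : X ◁ ((λ_ X).inv ≫ XS.eta ▷ X ≫ (α_ X X X).hom) ≫ (α_ X X (X ⊗ X)).inv
        ≫ XS.mul ▷ (X ⊗ X)
      = ((ρ_ X).inv ≫ X ◁ XS.unit ≫ X ◁ XS.comul ≫ (α_ X X X).inv ≫ XS.mul ▷ X) ▷ X
          ≫ (α_ X X X).hom := by
    simp only [ClassicalStructure.eta]
    monoidal
  rw [step, inner]
  have hc := coassoc D XS
  calc XS.eta ≫ X ◁ XS.comul = XS.unit ≫ (XS.comul ≫ X ◁ XS.comul) := by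
        simp [ClassicalStructure.eta]
    _ = XS.unit ≫ (XS.comul ≫ XS.comul ▷ X ≫ (α_ X X X).hom) := by rw [hc]
    _ = XS.eta ≫ XS.comul ▷ X ≫ (α_ X X X).hom := by simp [ClassicalStructure.eta]

lemma clause1 {A B : C} (f : X ⊗ A ⟶ B) : Psi D XS (Phi D XS f) = f := by
  calc Psi D XS (Phi D XS f)
      = X ◁ (λ_ A).inv ≫ X ◁ (XS.eta ▷ A) ≫ X ◁ (α_ X X A).hom
          ≫ (α_ X X (X ⊗ A)).inv ≫ (X ⊗ X) ◁ f ≫ XS.eps ▷ B ≫ (λ_ B).hom := by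
        simp only [Psi, Phi, id_tensorHom, tensorHom_id]
        monoidal
    _ = X ◁ (λ_ A).inv ≫ X ◁ (XS.eta ▷ A) ≫ X ◁ (α_ X X A).hom
          ≫ (α_ X X (X ⊗ A)).inv ≫ XS.eps ▷ (X ⊗ A) ≫ 𝟙_ C ◁ f ≫ (λ_ B).hom := by
        slice_lhs 5 6 => rw [whisker_exchange]
        simp only [Category.assoc]
    _ = (((ρ_ X).inv ≫ X ◁ XS.eta ≫ (α_ X X X).inv ≫ XS.eps ▷ X ≫ (λ_ X).hom) ▷ A) ≫ f := by
        monoidal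
    _ = f := by rw [snake1 D XS]; simp

lemma clause2 {A B : C} (h : A ⟶ X ⊗ B) : Phi D XS (Psi D XS h) = h := by
  calc Phi D XS (Psi D XS h)
      = (λ_ A).inv ≫ XS.eta ▷ A ≫ (X ⊗ X) ◁ h ≫ (α_ X X (X ⊗ B)).hom
          ≫ X ◁ (α_ X X B).inv ≫ X ◁ (XS.eps ▷ B) ≫ X ◁ (λ_ B).hom := by
        simp only [Psi, Phi, id_tensorHom, tensorHom_id]
        monoidal
    _ = (λ_ A).inv ≫ 𝟙_ C ◁ h ≫ XS.eta ▷ (X ⊗ B) ≫ (α_ X X (X ⊗ B)).hom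
          ≫ X ◁ (α_ X X B).inv ≫ X ◁ (XS.eps ▷ B) ≫ X ◁ (λ_ B).hom := by
        slice_lhs 2 3 => rw [← whisker_exchange]
        simp only [Category.assoc]
    _ = h ≫ (((λ_ X).inv ≫ XS.eta ▷ X ≫ (α_ X X X).hom ≫ X ◁ XS.eps ≫ (ρ_ X).hom) ▷ B) := by
        monoidal
    _ = h := by rw [snake2 D XS]; simp

lemma clause3 (A : C) : Phi D XS ((XS.counit ⊗ₘ 𝟙 A) ≫ (λ_ A).hom) =
    (λ_ A).inv ≫ (XS.unit ⊗ₘ 𝟙 A) := by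
  have key : XS.eta ≫ X ◁ XS.counit = XS.unit ≫ (ρ_ X).inv := by
    rw [ClassicalStructure.eta, Category.assoc, comul_counit_w D XS]
  calc Phi D XS ((XS.counit ⊗ₘ 𝟙 A) ≫ (λ_ A).hom)
      = (λ_ A).inv ≫ ((XS.eta ≫ X ◁ XS.counit) ≫ (ρ_ X).hom) ▷ A := by
        simp only [Phi, id_tensorHom, tensorHom_id]
        monoidal
    _ = (λ_ A).inv ≫ ((XS.unit ≫ (ρ_ X).inv) ≫ (ρ_ X).hom) ▷ A := by rw [key]
    _ = (λ_ A).inv ≫ (XS.unit ⊗ₘ 𝟙 A) := by simp [tensorHom_id]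

lemma clause4 {A B E : C} (f : X ⊗ A ⟶ B) (g : X ⊗ B ⟶ E) :
    Phi D XS ((XS.comul ⊗ₘ 𝟙 A) ≫ (α_ X X A).hom ≫ (𝟙 X ⊗ₘ f) ≫ g) =
      Phi D XS f ≫ (𝟙 X ⊗ₘ Phi D XS g) ≫ (α_ X X E).inv ≫ (XS.mul ⊗ₘ 𝟙 E) := by
  calc Phi D XS ((XS.comul ⊗ₘ 𝟙 A) ≫ (α_ X X A).hom ≫ (𝟙 X ⊗ₘ f) ≫ g)
      = (λ_ A).inv ≫ (XS.eta ≫ X ◁ XS.comul) ▷ A ≫ (α_ X (X ⊗ X) A).hom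
          ≫ X ◁ (α_ X X A).hom ≫ X ◁ (X ◁ f) ≫ X ◁ g := by
        simp only [Phi, id_tensorHom, tensorHom_id]
        monoidal
    _ = (λ_ A).inv ≫ (XS.eta ≫ X ◁ ((λ_ X).inv ≫ XS.eta ▷ X ≫ (α_ X X X).hom)
          ≫ (α_ X X (X ⊗ X)).inv ≫ XS.mul ▷ (X ⊗ X)) ▷ A ≫ (α_ X (X ⊗ X) A).hom
          ≫ X ◁ (α_ X X A).hom ≫ X ◁ (X ◁ f) ≫ X ◁ g := by
        rw [keyEta D XS]
    _ = (λ_ A).inv ≫ XS.eta ▷ A ≫ (α_ X X A).hom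
          ≫ X ◁ ((λ_ (X ⊗ A)).inv ≫ XS.eta ▷ (X ⊗ A) ≫ (α_ X X (X ⊗ A)).hom)
          ≫ (α_ X X (X ⊗ (X ⊗ A))).inv
          ≫ XS.mul ▷ (X ⊗ (X ⊗ A)) ≫ X ◁ (X ◁ f ≫ g) := by
        simp only [MonoidalCategory.whiskerLeft_comp]
        monoidal
    _ = (λ_ A).inv ≫ XS.eta ▷ A ≫ (α_ X X A).hom
          ≫ X ◁ ((λ_ (X ⊗ A)).inv ≫ XS.eta ▷ (X ⊗ A) ≫ (α_ X X (X ⊗ A)).hom)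
          ≫ (α_ X X (X ⊗ (X ⊗ A))).inv
          ≫ (X ⊗ X) ◁ (X ◁ f ≫ g) ≫ XS.mul ▷ E := by
        slice_lhs 6 7 => rw [← whisker_exchange]
    _ = (λ_ A).inv ≫ XS.eta ▷ A ≫ (α_ X X A).hom
          ≫ X ◁ ((λ_ (X ⊗ A)).inv ≫ (XS.eta ▷ (X ⊗ A) ≫ (X ⊗ X) ◁ f) ≫ (α_ X X B).hom
              ≫ X ◁ g)
          ≫ (α_ X X E).inv ≫ XS.mul ▷ E := by
        simp only [MonoidalCategory.whiskerLeft_comp]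
        monoidal
    _ = (λ_ A).inv ≫ XS.eta ▷ A ≫ (α_ X X A).hom
          ≫ X ◁ ((λ_ (X ⊗ A)).inv ≫ (𝟙_ C ◁ f ≫ XS.eta ▷ B) ≫ (α_ X X B).hom ≫ X ◁ g)
          ≫ (α_ X X E).inv ≫ XS.mul ▷ E := by
        rw [← whisker_exchange]
    _ = Phi D XS f ≫ (𝟙 X ⊗ₘ Phi D XS g) ≫ (α_ X X E).inv ≫ (XS.mul ⊗ₘ 𝟙 E) := by
        simp only [Phi, id_tensorHom, tensorHom_id, MonoidalCategory.whiskerLeft_comp]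
        monoidal

end Helpers

/-- `Φ` and `Ψ` are mutually inverse, `Φ` sends the coKleisli
identity to the Kleisli identity, and `Φ` turns coKleisli composition into
Kleisli composition. -/
theorem coKleisli_Kleisli_iso {X : C} (D : Dagger C)
    (XS : ClassicalStructure D X) :
    (∀ (A B : C) (f : X ⊗ A ⟶ B), Psi D XS (Phi D XS f) = f) ∧
    (∀ (A B : C) (h : A ⟶ X ⊗ B), Phi D XS (Psi D XS h) = h) ∧
    (∀ A : C, Phi D XS ((XS.counit ⊗ₘ 𝟙 A) ≫ (λ_ A).hom) =
      (λ_ A).inv ≫ (XS.unit ⊗ₘ 𝟙 A)) ∧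
    (∀ (A B E : C) (f : X ⊗ A ⟶ B) (g : X ⊗ B ⟶ E),
      Phi D XS ((XS.comul ⊗ₘ 𝟙 A) ≫ (α_ X X A).hom ≫ (𝟙 X ⊗ₘ f) ≫ g) =
        Phi D XS f ≫ (𝟙 X ⊗ₘ Phi D XS g) ≫ (α_ X X E).inv ≫ (XS.mul ⊗ₘ 𝟙 E)) := by
  exact ⟨fun A B f => clause1 D XS f, fun A B h => clause2 D XS h,
    fun A => clause3 D XS A, fun A B E f g => clause4 D XS f g⟩
end

section
/- Let φ : X ⟶ Y be a morphism between classical structures and for each object A define ℘φ : Hom(Y ⊗ A, B) ⟶ Hom(X ⊗ A, B) by ℘φ(g) := (φ ⊗ 𝟙_A) ≫ g. Then ℘φ is functorial for the coKleisli structures — i.e. for every object A, ℘φ((⊤_Y ⊗ 𝟙_A) ≫ λ_A) = (⊤_X ⊗ 𝟙_A) ≫ λ_A, and for all f : Y ⊗ A ⟶ B and g : Y ⊗ B ⟶ C, ℘φ((Δ_Y ⊗ 𝟙_A) ≫ (𝟙_Y ⊗ f) ≫ g) = (Δ_X ⊗ 𝟙_A) ≫ (𝟙_X ⊗ ℘φ(f))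 ≫ ℘φ(g) — if and only if φ is a comonoid homomorphism, i.e. φ ≫ Δ_Y = Δ_X ≫ (φ ⊗ φ) and φ ≫ ⊤_Y = ⊤_X. -/
open CategoryTheory MonoidalCategory

universe v u

variable {C : Type u} [Category.{v} C] [MonoidalCategory C] [SymmetricCategory C]

/-- `℘φ(g) := (φ ⊗ 𝟙_A) ≫ g` is functorial for the coKleisli
structures if and only if `φ` is a comonoid homomorphism. -/
theorem indexing_functorial_iff_comonoid_hom {X Y : C} (D : Dagger C)
    (XS : ClassicalStructure D X) (YS : ClassicalStructure D Y) (φ : X ⟶ Y) :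
    ((∀ A : C,
        (φ ⊗ₘ 𝟙 A) ≫ (YS.counit ⊗ₘ 𝟙 A) ≫ (λ_ A).hom =
          (XS.counit ⊗ₘ 𝟙 A) ≫ (λ_ A).hom) ∧
      (∀ (A B E : C) (f : Y ⊗ A ⟶ B) (g : Y ⊗ B ⟶ E),
        (φ ⊗ₘ 𝟙 A) ≫ (YS.comul ⊗ₘ 𝟙 A) ≫ (α_ Y Y A).hom ≫ (𝟙 Y ⊗ₘ f) ≫ g =
          (XS.comul ⊗ₘ 𝟙 A) ≫ (α_ X X A).hom ≫ (𝟙 X ⊗ₘ ((φ ⊗ₘ 𝟙 A) ≫ f)) ≫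
            ((φ ⊗ₘ 𝟙 B) ≫ g))) ↔
    (φ ≫ YS.comul = XS.comul ≫ (φ ⊗ₘ φ) ∧ φ ≫ YS.counit = XS.counit) := by
  constructor
  · rintro ⟨h1, h2⟩
    refine ⟨?_, ?_⟩
    · have key := h2 (𝟙_ C) Y (Y ⊗ Y) (ρ_ Y).hom (𝟙 (Y ⊗ Y))
      have key' : φ ≫ YS.comul = XS.comul ≫ X ◁ φ ≫ φ ▷ Y := by
        simpa [tensorHom_id, id_tensorHom, rightUnitor_naturality,
          rightUnitor_naturality_assoc, MonoidalCategory.tensorHom_def] using key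
      simp [key', tensorHom_def']
    · have key := h1 (𝟙_ C)
      have key' : (ρ_ X).hom ≫ (φ ≫ YS.counit) = (ρ_ X).hom ≫ XS.counit := by
        simpa [tensorHom_id, unitors_equal, rightUnitor_naturality,
          rightUnitor_naturality_assoc] using key
      exact (cancel_epi (ρ_ X).hom).mp key'
  · rintro ⟨hc, he⟩
    constructor
    · intro A
      rw [← Category.assoc, tensorHom_comp_tensorHom, he, Category.comp_id]
    · intro A B E f g
      rw [← Category.assoc, tensorHom_comp_tensorHom, hc, Category.comp_id, comp_tensor_id,
        Category.assoc, associator_naturality_assoc]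
      simp only [tensorHom_id, id_tensorHom, comp_whiskerRight,
        MonoidalCategory.whiskerLeft_comp, Category.assoc,
        associator_inv_naturality_middle_assoc, Iso.hom_inv_id_assoc,
        tensorHom_def', ← associator_naturality_middle_assoc,
        ← associator_naturality_left_assoc,
        MonoidalCategory.whiskerLeft_id, MonoidalCategory.id_whiskerRight,
        Category.id_comp, Category.comp_id, whisker_exchange_assoc]
end
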